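/- For every integer p ≥ κ, the conditional expectation of π_p² with respect to the σ-algebra φ^{−p}(F) equals F_p∘φ^p μ-almost everywhere; equivalently, on each atom A of φ^{−p}(F) the function F_p∘φ^p is constant with value (1/μ(A)) ∫_A π_p² dμ. -/

import Mathlib

open MeasureTheory Finset

noncomputable section

/-- Sum of a real family over the branch indices `i ∈ J_{η r} = {i : 1 ≤ i ≤ η r}`
(a `tsum`, since `η r` may be `∞`). -/
def bsumR (η : ℕ → ℕ∞) (r : ℕ) (f : ℕ → ℝ) : ℝ :=
  ∑' i : ℕ, Set.indicator {i : ℕ | 1 ≤ i ∧ (i : ℕ∞) ≤ η r} f i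

/-- `π_p = π·(π∘φ)·(π∘φ²)⋯(π∘φ^{p-1})`, with `π_0 = 1`. -/
def piProd {X : Type*} (φ : X → X) (π : X → ℝ) (p : ℕ) (x : X) : ℝ :=
  ∏ q ∈ Finset.range p, π (φ^[q] x)

theorem stmt19
    (κ : ℕ) (hκ : 1 ≤ κ)
    (Φ₂ : ℤ → ℕ)
    (hΦ₂ : ∀ q : ℤ, (1 ≤ Φ₂ q ∧ Φ₂ q ≤ κ) ∧ (κ : ℤ) ∣ q - (Φ₂ q : ℤ))
    (X : Type*) [MeasurableSpace X] [Countable X]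
    (hmeas : ∀ s : Set X, MeasurableSet s)
    (η : ℕ → ℕ∞)
    (hη : ∃ r : ℕ, 1 ≤ r ∧ r ≤ κ ∧ η r ≠ 0)
    (xc : ℕ → X) (xb : ℕ → ℕ → ℕ → X)
    (hinj₁ : ∀ r r' : ℕ, 1 ≤ r → r ≤ κ → 1 ≤ r' → r' ≤ κ → xc r = xc r' → r = r')
    (hinj₂ : ∀ r r' i j : ℕ, 1 ≤ r → r ≤ κ → 1 ≤ r' → r' ≤ κ → 1 ≤ i → (i : ℕ∞) ≤ η r' →
      1 ≤ j → xc r ≠ xb r' i j)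
    (hinj₃ : ∀ r i j r' i' j' : ℕ, 1 ≤ r → r ≤ κ → 1 ≤ i → (i : ℕ∞) ≤ η r → 1 ≤ j →
      1 ≤ r' → r' ≤ κ → 1 ≤ i' → (i' : ℕ∞) ≤ η r' → 1 ≤ j' →
      xb r i j = xb r' i' j' → r = r' ∧ i = i' ∧ j = j')
    (hsurj : ∀ x : X, (∃ r : ℕ, 1 ≤ r ∧ r ≤ κ ∧ x = xc r) ∨
      ∃ r i j : ℕ, 1 ≤ r ∧ r ≤ κ ∧ 1 ≤ i ∧ (i : ℕ∞) ≤ η r ∧ 1 ≤ j ∧ x = xb r i j)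
    (φ : X → X)
    (hφ₁ : ∀ r i j : ℕ, 1 ≤ r → r ≤ κ → 1 ≤ i → (i : ℕ∞) ≤ η r → 1 ≤ j →
      φ (xb r i (j + 1)) = xb r i j)
    (hφ₂ : ∀ r i : ℕ, 1 ≤ r → r ≤ κ → 1 ≤ i → (i : ℕ∞) ≤ η r → φ (xb r i 1) = xc r)
    (hφ₃ : ∀ r : ℕ, 1 ≤ r → r ≤ κ → φ (xc (Φ₂ ((r : ℤ) + 1))) = xc r)
    (μ : Measure X) [SigmaFinite μ]
    (hμ : ∀ x : X, 0 < μ {x} ∧ μ {x} < ⊤)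
    (π : X → ℝ) (hπ : ∃ B : ℝ, ∀ x : X, |π x| ≤ B)
    (hpre : ∀ (p : ℕ) (x : X), μ ((φ^[p]) ⁻¹' {x}) < ⊤)
    (F : ℕ → X → ℝ)
    (hFb : ∀ p r i j : ℕ, 1 ≤ r → r ≤ κ → 1 ≤ i → (i : ℕ∞) ≤ η r → 1 ≤ j →
      F p (xb r i j) = (piProd φ π p (xb r i (j + p))) ^ 2)
    (hFc : ∀ p r : ℕ, 1 ≤ r → r ≤ κ →
      F p (xc r) =
        ((piProd φ π p (xc (Φ₂ ((p + r : ℕ) : ℤ)))) ^ 2 *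
            (μ {xc (Φ₂ ((p + r : ℕ) : ℤ))}).toReal +
          ∑ j ∈ Finset.Icc 1 p,
            ∑ s ∈ {s ∈ Finset.Icc 1 κ | Φ₂ ((p + r : ℕ) : ℤ) = Φ₂ ((s + j : ℕ) : ℤ)},
              bsumR η s (fun i => (piProd φ π p (xb s i j)) ^ 2 * (μ {xb s i j}).toReal)) /
        ((μ {xc (Φ₂ ((p + r : ℕ) : ℤ))}).toReal +
          ∑ j ∈ Finset.Icc 1 p,
            ∑ s ∈ {s ∈ Finset.Icc 1 κ | Φ₂ ((p + r : ℕ) : ℤ) = Φ₂ ((s + j : ℕ) : ℤ)},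
              bsumR η s (fun i => (μ {xb s i j}).toReal)))
    (p : ℕ) (hp : κ ≤ p) :
    ∀ x : X, ((φ^[p]) ⁻¹' {x}).Nonempty →
      ∀ y ∈ (φ^[p]) ⁻¹' {x},
        F p (φ^[p] y) =
          (∫ z in (φ^[p]) ⁻¹' {x}, (piProd φ π p z) ^ 2 ∂μ) /
            (μ ((φ^[p]) ⁻¹' {x})).toReal := by
  classical
  haveI : MeasurableSingletonClass X := ⟨fun a => hmeas {a}⟩
  have hmf : ∀ f : X → ℝ, Measurable f := fun f t _ => hmeas _
  obtain ⟨B, hB⟩ := hπ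
  have hbound : ∀ z : X, |(piProd φ π p z) ^ 2| ≤ (B ^ p) ^ 2 := by
    intro z
    have h1 : |piProd φ π p z| ≤ B ^ p := by
      rw [piProd, Finset.abs_prod]
      calc ∏ q ∈ Finset.range p, |π (φ^[q] z)|
          ≤ ∏ q ∈ Finset.range p, B :=
            Finset.prod_le_prod (fun _ _ => abs_nonneg _) (fun q _ => hB _)
        _ = B ^ p := by rw [Finset.prod_const, Finset.card_range]
    calc |(piProd φ π p z) ^ 2| = |piProd φ π p z| ^ 2 := abs_pow _ _
      _ ≤ (B ^ p) ^ 2 := pow_le_pow_left₀ (abs_nonneg _) h1 2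
  -- Φ₂ arithmetic
  have hdΦ : ∀ a : ℤ, (κ : ℤ) ∣ a - Φ₂ a := fun a => (hΦ₂ a).2
  have hΦmem : ∀ a : ℤ, 1 ≤ Φ₂ a ∧ Φ₂ a ≤ κ := fun a => (hΦ₂ a).1
  have hzero : ∀ a : ℤ, (κ : ℤ) ∣ a → -(κ : ℤ) < a → a < κ → a = 0 := by
    rintro a ⟨c, rfl⟩ h1 h2
    have hκ' : (0 : ℤ) < κ := by exact_mod_cast hκ
    rcases lt_trichotomy c 0 with h | h | h
    · nlinarith
    · simp [h]
    · nlinarith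
  have huniq : ∀ (a : ℤ) (t : ℕ), 1 ≤ t → t ≤ κ → (κ : ℤ) ∣ a - t → Φ₂ a = t := by
    intro a t h1 h2 hd
    obtain ⟨ha1, ha2⟩ := hΦmem a
    have h3 : (κ : ℤ) ∣ (Φ₂ a : ℤ) - t := by
      have h4 := dvd_sub hd (hdΦ a)
      rwa [show a - (t : ℤ) - (a - (Φ₂ a : ℤ)) = (Φ₂ a : ℤ) - t from by ring] at h4
    have h5 := hzero _ h3 (by omega) (by omega)
    omega
  have hcongr : ∀ a b : ℤ, (κ : ℤ) ∣ a - b → Φ₂ a = Φ₂ b := by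
    intro a b hd
    obtain ⟨hb1, hb2⟩ := hΦmem b
    refine huniq a (Φ₂ b) hb1 hb2 ?_
    have h4 := dvd_add hd (hdΦ b)
    rwa [show a - b + (b - (Φ₂ b : ℤ)) = a - (Φ₂ b : ℤ) from by ring] at h4
  have hΦdvd : ∀ a b : ℤ, Φ₂ a = Φ₂ b → (κ : ℤ) ∣ a - b := by
    intro a b h
    have h2 := dvd_sub (hdΦ a) (hdΦ b)
    rw [h] at h2
    rwa [show a - (Φ₂ b : ℤ) - (b - (Φ₂ b : ℤ)) = a - b from by ring] at h2
  -- circuit dynamics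
  have hφc : ∀ t : ℕ, 1 ≤ t → t ≤ κ → φ (xc t) = xc (Φ₂ ((t : ℤ) - 1)) := by
    intro t h1 h2
    obtain ⟨hr1, hr2⟩ := hΦmem ((t : ℤ) - 1)
    have ht : Φ₂ ((Φ₂ ((t : ℤ) - 1) : ℤ) + 1) = t := by
      refine huniq _ t h1 h2 ?_
      have h4 := dvd_neg.mpr (hdΦ ((t : ℤ) - 1))
      rwa [show -((t : ℤ) - 1 - (Φ₂ ((t : ℤ) - 1) : ℤ)) =
        (Φ₂ ((t : ℤ) - 1) : ℤ) + 1 - t from by ring] at h4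
    calc φ (xc t) = φ (xc (Φ₂ ((Φ₂ ((t : ℤ) - 1) : ℤ) + 1))) := by rw [ht]
      _ = xc (Φ₂ ((t : ℤ) - 1)) := hφ₃ _ hr1 hr2
  have hitc : ∀ (q t : ℕ), 1 ≤ t → t ≤ κ → φ^[q] (xc t) = xc (Φ₂ ((t : ℤ) - q)) := by
    intro q
    induction q with
    | zero =>
        intro t h1 h2
        simp only [Function.iterate_zero_apply, Nat.cast_zero, sub_zero]
        rw [huniq (t : ℤ) t h1 h2 (by simp)]
    | succ q ih =>
        intro t h1 h2
        rw [Function.iterate_succ_apply', ih t h1 h2, hφc _ (hΦmem _).1 (hΦmem _).2]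
        congr 1
        apply hcongr
        have h4 := dvd_neg.mpr (hdΦ ((t : ℤ) - q))
        rwa [show -((t : ℤ) - q - (Φ₂ ((t : ℤ) - q) : ℤ)) =
          (Φ₂ ((t : ℤ) - q) : ℤ) - 1 - ((t : ℤ) - ((q : ℕ) + 1 : ℕ)) from by push_cast; ring] at h4
  -- branch dynamics
  have hitb_up : ∀ (q s i j : ℕ), 1 ≤ s → s ≤ κ → 1 ≤ i → (i : ℕ∞) ≤ η s → 1 ≤ j →
      φ^[q] (xb s i (j + q)) = xb s i j := by
    intro q
    induction q with
    | zero => intro s i j _ _ _ _ _; simp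
    | succ q ih =>
        intro s i j h1 h2 h3 h4 h5
        rw [show j + (q + 1) = (j + 1) + q from by omega, Function.iterate_succ_apply',
          ih s i (j + 1) h1 h2 h3 h4 (by omega)]
        exact hφ₁ s i j h1 h2 h3 h4 h5
  have hitb_base : ∀ (s i j : ℕ), 1 ≤ s → s ≤ κ → 1 ≤ i → (i : ℕ∞) ≤ η s → 1 ≤ j →
      φ^[j] (xb s i j) = xc s := by
    intro s i j h1 h2 h3 h4 h5
    obtain ⟨j', rfl⟩ : ∃ j', j = j' + 1 := ⟨j - 1, by omega⟩
    rw [Function.iterate_succ_apply', show j' + 1 = 1 + j' from by omega,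
      hitb_up j' s i 1 h1 h2 h3 h4 le_rfl]
    exact hφ₂ s i h1 h2 h3 h4
  have hitb_down : ∀ (d s i j : ℕ), 1 ≤ s → s ≤ κ → 1 ≤ i → (i : ℕ∞) ≤ η s → 1 ≤ j →
      φ^[j + d] (xb s i j) = xc (Φ₂ ((s : ℤ) - d)) := by
    intro d s i j h1 h2 h3 h4 h5
    rw [Nat.add_comm j d, Function.iterate_add_apply, hitb_base s i j h1 h2 h3 h4 h5,
      hitc d s h1 h2]
  -- main
  intro x _hne y hy
  have hyx : φ^[p] y = x := hy
  rw [hyx]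
  rcases hsurj x with ⟨r, hr1, hr2, rfl⟩ | ⟨r, i, j, hr1, hr2, hi1, hi2, hj1, rfl⟩
  · -- circuit case
    obtain ⟨hM1, hM2⟩ := hΦmem ((p + r : ℕ) : ℤ)
    have hmem : ∀ z : X, φ^[p] z = xc r ↔
        z = xc (Φ₂ ((p + r : ℕ) : ℤ)) ∨
        ∃ j s i : ℕ, (1 ≤ j ∧ j ≤ p) ∧ (1 ≤ s ∧ s ≤ κ) ∧
          Φ₂ ((p + r : ℕ) : ℤ) = Φ₂ ((s + j : ℕ) : ℤ) ∧
          1 ≤ i ∧ (i : ℕ∞) ≤ η s ∧ z = xb s i j := by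
      intro z
      constructor
      · intro hz
        rcases hsurj z with ⟨t, ht1, ht2, rfl⟩ | ⟨s, i', j', hs1, hs2, hi'1, hi'2, hj'1, rfl⟩
        · left
          rw [hitc p t ht1 ht2] at hz
          have h1 : Φ₂ ((t : ℤ) - p) = r :=
            hinj₁ _ r (hΦmem _).1 (hΦmem _).2 hr1 hr2 hz
          have h2 : Φ₂ ((p + r : ℕ) : ℤ) = t := by
            refine huniq _ t ht1 ht2 ?_
            have h3 := hdΦ ((t : ℤ) - p)
            rw [h1] at h3
            have h4 := dvd_neg.mpr h3
            rwa [show -((t : ℤ) - p - r) = ((p + r : ℕ) : ℤ) - t from by push_cast; ring] at h4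
          rw [h2]
        · rcases le_or_gt j' p with h | h
          · right
            have hd2 : j' + (p - j') = p := by omega
            have h6 := hitb_down (p - j') s i' j' hs1 hs2 hi'1 hi'2 hj'1
            rw [hd2] at h6
            rw [h6] at hz
            have h1 : Φ₂ ((s : ℤ) - ((p - j' : ℕ) : ℤ)) = r :=
              hinj₁ _ r (hΦmem _).1 (hΦmem _).2 hr1 hr2 hz
            refine ⟨j', s, i', ⟨hj'1, h⟩, ⟨hs1, hs2⟩, ?_, hi'1, hi'2, rfl⟩
            refine hcongr _ _ ?_
            have h3 := hdΦ ((s : ℤ) - ((p - j' : ℕ) : ℤ))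
            rw [h1] at h3
            have h4 := dvd_neg.mpr h3
            rwa [show -((s : ℤ) - ((p - j' : ℕ) : ℤ) - r) =
              ((p + r : ℕ) : ℤ) - ((s + j' : ℕ) : ℤ) from by
                rw [Nat.cast_sub h]; push_cast; ring] at h4
          · obtain ⟨j'', rfl⟩ : ∃ j'', j' = j'' + p := ⟨j' - p, by omega⟩
            rw [hitb_up p s i' j'' hs1 hs2 hi'1 hi'2 (by omega)] at hz
            exact absurd hz.symm (hinj₂ r s i' j'' hr1 hr2 hs1 hs2 hi'1 hi'2 (by omega))
      · intro hz
        rcases hz with rfl | ⟨j', s, i', ⟨hj'1, hj'2⟩, ⟨hs1, hs2⟩, hΦeq, hi'1, hi'2, rfl⟩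
        · rw [hitc p _ hM1 hM2]
          congr 1
          refine huniq _ r hr1 hr2 ?_
          have h4 := dvd_neg.mpr (hdΦ ((p + r : ℕ) : ℤ))
          rwa [show -(((p + r : ℕ) : ℤ) - (Φ₂ ((p + r : ℕ) : ℤ) : ℤ)) =
            (Φ₂ ((p + r : ℕ) : ℤ) : ℤ) - p - r from by push_cast; ring] at h4
        · have hd2 : j' + (p - j') = p := by omega
          have h6 := hitb_down (p - j') s i' j' hs1 hs2 hi'1 hi'2 hj'1
          rw [hd2] at h6
          rw [h6]
          congr 1
          refine huniq _ r hr1 hr2 ?_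
          have h4 := dvd_neg.mpr (hΦdvd _ _ hΦeq)
          rwa [show -(((p + r : ℕ) : ℤ) - ((s + j' : ℕ) : ℤ)) =
            (s : ℤ) - ((p - j' : ℕ) : ℤ) - r from by
              rw [Nat.cast_sub hj'2]; push_cast; ring] at h4
    set A : Set X := (φ^[p]) ⁻¹' {xc r} with hA_def
    set Cst : ℕ × ℕ → ℕ → Set X :=
      fun q i => {z | (1 ≤ i ∧ (i : ℕ∞) ≤ η q.2) ∧ z = xb q.2 i q.1} with hCst_def
    set T : Finset (ℕ × ℕ) := (Finset.Icc 1 p ×ˢ Finset.Icc 1 κ).filter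
      (fun q => Φ₂ ((p + r : ℕ) : ℤ) = Φ₂ ((q.2 + q.1 : ℕ) : ℤ)) with hT_def
    have hTmem : ∀ q : ℕ × ℕ, q ∈ T ↔
        ((1 ≤ q.1 ∧ q.1 ≤ p) ∧ (1 ≤ q.2 ∧ q.2 ≤ κ)) ∧
          Φ₂ ((p + r : ℕ) : ℤ) = Φ₂ ((q.2 + q.1 : ℕ) : ℤ) := by
      intro q
      rw [hT_def, Finset.mem_filter, Finset.mem_product, Finset.mem_Icc, Finset.mem_Icc]
    have hA : A = {xc (Φ₂ ((p + r : ℕ) : ℤ))} ∪ ⋃ q ∈ T, ⋃ i, Cst q i := by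
      ext z
      have hz : z ∈ A ↔ φ^[p] z = xc r := Iff.rfl
      rw [hz, hmem z]
      simp only [Set.mem_union, Set.mem_singleton_iff, Set.mem_iUnion, hCst_def,
        Set.mem_setOf_eq, hTmem]
      constructor
      · rintro (rfl | ⟨j', s, i', ⟨a1, a2⟩, ⟨b1, b2⟩, c, d1, d2, rfl⟩)
        · exact Or.inl rfl
        · exact Or.inr ⟨(j', s), ⟨⟨⟨a1, a2⟩, b1, b2⟩, c⟩, i', ⟨d1, d2⟩, rfl⟩
      · rintro (rfl | ⟨⟨j', s⟩, ⟨⟨⟨a1, a2⟩, b1, b2⟩, c⟩, i', ⟨d1, d2⟩, rfl⟩)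
        · exact Or.inl rfl
        · exact Or.inr ⟨j', s, i', ⟨a1, a2⟩, ⟨b1, b2⟩, c, d1, d2, rfl⟩
    have hAfin : μ A < ⊤ := hpre p (xc r)
    haveI hfinA : IsFiniteMeasure (μ.restrict A) :=
      ⟨by rw [Measure.restrict_apply_univ]; exact hAfin⟩
    have hInt : ∀ f : X → ℝ, (∃ Cb : ℝ, ∀ z, |f z| ≤ Cb) → IntegrableOn f A μ := by
      rintro f ⟨Cb, hCb⟩
      exact (integrable_const Cb).mono' (hmf f).aestronglyMeasurable
        (Filter.Eventually.of_forall fun z => by simpa [Real.norm_eq_abs] using hCb z)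
    have hCsub : ∀ q ∈ T, (⋃ i, Cst q i) ⊆ A := by
      intro q hq z hzmem
      simp only [Set.mem_iUnion, hCst_def, Set.mem_setOf_eq] at hzmem
      obtain ⟨i', ⟨d1, d2⟩, rfl⟩ := hzmem
      obtain ⟨⟨⟨a1, a2⟩, b1, b2⟩, c⟩ := (hTmem q).1 hq
      show φ^[p] _ ∈ ({xc r} : Set X)
      exact (hmem _).2 (Or.inr ⟨q.1, q.2, i', ⟨a1, a2⟩, ⟨b1, b2⟩, c, d1, d2, rfl⟩)
    have hdisj1 : Disjoint {xc (Φ₂ ((p + r : ℕ) : ℤ))} (⋃ q ∈ T, ⋃ i, Cst q i) := by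
      rw [Set.disjoint_left]
      rintro a rfl ha
      simp only [Set.mem_iUnion, hCst_def, Set.mem_setOf_eq] at ha
      obtain ⟨q, hq, i', ⟨d1, d2⟩, heq⟩ := ha
      obtain ⟨⟨⟨a1, a2⟩, b1, b2⟩, c⟩ := (hTmem q).1 hq
      exact hinj₂ _ q.2 i' q.1 hM1 hM2 b1 b2 d1 d2 a1 heq
    have hdisjB : Set.Pairwise (↑T) (Function.onFun Disjoint fun q => ⋃ i, Cst q i) := by
      intro q hq q' hq' hne
      simp only [Function.onFun]
      rw [Set.disjoint_left]
      intro a ha ha'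
      simp only [Set.mem_iUnion, hCst_def, Set.mem_setOf_eq] at ha ha'
      obtain ⟨i1, ⟨d1, d2⟩, rfl⟩ := ha
      obtain ⟨i2, ⟨e1, e2⟩, heq⟩ := ha'
      rw [Finset.mem_coe] at hq hq'
      obtain ⟨⟨⟨a1, a2⟩, b1, b2⟩, c⟩ := (hTmem q).1 hq
      obtain ⟨⟨⟨a1', a2'⟩, b1', b2'⟩, c'⟩ := (hTmem q').1 hq'
      obtain ⟨h1, h2, h3⟩ := hinj₃ q.2 i1 q.1 q'.2 i2 q'.1 b1 b2 d1 d2 a1 b1' b2' e1 e2 a1' heq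
      exact hne (Prod.ext h3 h1)
    have hdisjC : ∀ q ∈ T, Pairwise (Function.onFun Disjoint (Cst q)) := by
      intro q hq i1 i2 hne
      simp only [Function.onFun]
      rw [Set.disjoint_left]
      intro a ha ha'
      simp only [hCst_def, Set.mem_setOf_eq] at ha ha'
      obtain ⟨⟨d1, d2⟩, rfl⟩ := ha
      obtain ⟨⟨e1, e2⟩, heq⟩ := ha'
      obtain ⟨⟨⟨a1, a2⟩, b1, b2⟩, c⟩ := (hTmem q).1 hq
      exact hne (hinj₃ q.2 i1 q.1 q.2 i2 q.1 b1 b2 d1 d2 a1 b1 b2 e1 e2 a1 heq).2.1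
    have key : ∀ f : X → ℝ, (∃ Cb : ℝ, ∀ z, |f z| ≤ Cb) →
        ∫ z in A, f z ∂μ =
          f (xc (Φ₂ ((p + r : ℕ) : ℤ))) * (μ {xc (Φ₂ ((p + r : ℕ) : ℤ))}).toReal +
          ∑ j ∈ Finset.Icc 1 p,
            ∑ s ∈ {s ∈ Finset.Icc 1 κ | Φ₂ ((p + r : ℕ) : ℤ) = Φ₂ ((s + j : ℕ) : ℤ)},
              bsumR η s (fun i => f (xb s i j) * (μ {xb s i j}).toReal) := by
      intro f hf
      have hint := hInt f hf
      have hsub2 : (⋃ q ∈ T, ⋃ i, Cst q i) ⊆ A := Set.iUnion₂_subset hCsub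
      have hsub1 : {xc (Φ₂ ((p + r : ℕ) : ℤ))} ⊆ A := by
        rw [Set.singleton_subset_iff]
        show φ^[p] _ ∈ ({xc r} : Set X)
        exact (hmem _).2 (Or.inl rfl)
      rw [hA, setIntegral_union hdisj1 (hmeas _) (hint.mono_set hsub1) (hint.mono_set hsub2),
        integral_singleton,
        integral_biUnion_finset T (fun q _ => hmeas _) hdisjB
          (fun q hq => hint.mono_set (hCsub q hq)),
        smul_eq_mul, mul_comm]
      congr 1
      have hBq : ∀ q ∈ T, ∫ z in ⋃ i, Cst q i, f z ∂μ =
          bsumR η q.2 (fun i => f (xb q.2 i q.1) * (μ {xb q.2 i q.1}).toReal) := by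
        intro q hq
        rw [integral_iUnion (fun i => hmeas _) (hdisjC q hq) (hint.mono_set (hCsub q hq)),
          bsumR]
        refine tsum_congr fun i => ?_
        by_cases hi : 1 ≤ i ∧ (i : ℕ∞) ≤ η q.2
        · have hCi : Cst q i = {xb q.2 i q.1} := by
            ext z
            simp only [hCst_def, Set.mem_setOf_eq, Set.mem_singleton_iff]
            exact ⟨fun h => h.2, fun h => ⟨hi, h⟩⟩
          rw [hCi, integral_singleton, measureReal_def, Set.indicator_of_mem (show i ∈ {i : ℕ | 1 ≤ i ∧ (i : ℕ∞) ≤ η q.2} from hi), smul_eq_mul, mul_comm]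
        · have hCi : Cst q i = ∅ := by
            ext z
            simp only [hCst_def, Set.mem_setOf_eq, Set.mem_empty_iff_false, iff_false]
            rintro ⟨hcond, _⟩
            exact hi hcond
          rw [hCi, setIntegral_empty, Set.indicator_of_notMem (show i ∉ {i : ℕ | 1 ≤ i ∧ (i : ℕ∞) ≤ η q.2} from hi)]
      rw [Finset.sum_congr rfl hBq, hT_def, Finset.sum_filter, Finset.sum_product]
      refine Finset.sum_congr rfl fun j' hj' => ?_
      rw [Finset.sum_filter]
    have hnum := key (fun z => piProd φ π p z ^ 2) ⟨(B ^ p) ^ 2, hbound⟩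
    have hden := key (fun _ => (1 : ℝ)) ⟨1, fun z => by norm_num⟩
    beta_reduce at hnum hden
    rw [setIntegral_const, smul_eq_mul, mul_one, measureReal_def] at hden
    simp only [one_mul] at hden
    rw [hFc p r hr1 hr2, hnum, hden]
  · -- branch case
    have hpre_eq : (φ^[p]) ⁻¹' {xb r i j} = {xb r i (j + p)} := by
      ext z
      simp only [Set.mem_preimage, Set.mem_singleton_iff]
      constructor
      · intro hz
        rcases hsurj z with ⟨t, ht1, ht2, rfl⟩ | ⟨s, i', j', hs1, hs2, hi'1, hi'2, hj'1, rfl⟩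
        · rw [hitc p t ht1 ht2] at hz
          exact absurd hz (hinj₂ _ r i j (hΦmem _).1 (hΦmem _).2 hr1 hr2 hi1 hi2 hj1)
        · rcases le_or_gt j' p with h | h
          · have hd2 : j' + (p - j') = p := by omega
            have h6 := hitb_down (p - j') s i' j' hs1 hs2 hi'1 hi'2 hj'1
            rw [hd2] at h6
            rw [h6] at hz
            exact absurd hz (hinj₂ _ r i j (hΦmem _).1 (hΦmem _).2 hr1 hr2 hi1 hi2 hj1)
          · obtain ⟨j'', rfl⟩ : ∃ j'', j' = j'' + p := ⟨j' - p, by omega⟩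
            rw [hitb_up p s i' j'' hs1 hs2 hi'1 hi'2 (by omega)] at hz
            obtain ⟨rfl, rfl, rfl⟩ := hinj₃ s i' j'' r i j hs1 hs2 hi'1 hi'2 (by omega)
              hr1 hr2 hi1 hi2 hj1 hz
            rfl
      · rintro rfl
        exact hitb_up p r i j hr1 hr2 hi1 hi2 hj1
    rw [hpre_eq, integral_singleton, hFb p r i j hr1 hr2 hi1 hi2 hj1, smul_eq_mul]
    have hμpos : (μ {xb r i (j + p)}).toReal ≠ 0 :=
      (ENNReal.toReal_pos (hμ _).1.ne' (hμ _).2.ne).ne'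
    field_simp
    rfl
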